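/- For every α ∈ (0,1), ∫_0^∞ ( e^{-x}/(1−e^{-x}) − e^{-x/α}/(1−e^{-x/α}) − e^{-x/(1−α)}/(1−e^{-x/(1−α)}) ) dx = −(α log α + (1−α) log(1−α)). -/

import Mathlib

open Real MeasureTheory Set Filter Topology

private lemma ent_h_nonneg {y : ℝ} (hy : 0 ≤ y) : 0 ≤ (y - 2) * Real.exp y + y + 2 := by
  have k_nonneg : ∀ z : ℝ, 0 ≤ (z - 1) * Real.exp z + 1 := by
    intro z
    have h1 : 1 - z ≤ Real.exp (-z) := by linarith [Real.add_one_le_exp (-z)]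
    have h2 : (1 - z) * Real.exp z ≤ 1 := by
      calc (1 - z) * Real.exp z ≤ Real.exp (-z) * Real.exp z :=
            mul_le_mul_of_nonneg_right h1 (Real.exp_pos z).le
        _ = 1 := by rw [← Real.exp_add]; simp
    nlinarith
  have hd : ∀ z : ℝ, HasDerivAt (fun y : ℝ => (y - 2) * Real.exp y + y + 2)
      ((z - 1) * Real.exp z + 1) z := by
    intro z
    have h := ((((hasDerivAt_id z).sub_const 2).mul (Real.hasDerivAt_exp z)).add
      (hasDerivAt_id z)).add_const 2
    refine h.congr_deriv ?_
    simp [id]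
    ring
  have mono : MonotoneOn (fun y : ℝ => (y - 2) * Real.exp y + y + 2) (Ici 0) := by
    apply monotoneOn_of_deriv_nonneg (convex_Ici 0)
    · exact (Continuous.continuousOn (by continuity))
    · intro z _
      exact ((hd z).differentiableAt).differentiableWithinAt
    · intro z hz
      rw [(hd z).deriv]
      exact k_nonneg z
  have := mono (self_mem_Ici) (mem_Ici.2 hy) hy
  simpa using this

private lemma ent_expm1_pos {y : ℝ} (hy : 0 < y) : 0 < Real.exp y - 1 := by
  have := Real.add_one_lt_exp (ne_of_gt hy); linarith

private lemma ent_exp_neg_lt_one {y : ℝ} (hy : 0 < y) : Real.exp (-y) < 1 := by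
  calc Real.exp (-y) < Real.exp 0 := Real.exp_lt_exp.2 (by linarith)
    _ = 1 := Real.exp_zero

private lemma ent_f_eq {y : ℝ} (hy : 0 < y) :
    Real.exp (-y) / (1 - Real.exp (-y)) = 1 / (Real.exp y - 1) := by
  have h1 : Real.exp y ≠ 0 := (Real.exp_pos y).ne'
  have h2 : Real.exp y - 1 ≠ 0 := (ent_expm1_pos hy).ne'
  have h3 : 1 - Real.exp (-y) ≠ 0 := by
    have := ent_exp_neg_lt_one hy; linarith
  rw [Real.exp_neg] at h3 ⊢
  field_simp

private lemma ent_f_le {y : ℝ} (hy : 0 < y) :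
    Real.exp (-y) / (1 - Real.exp (-y)) ≤ 1 / y := by
  rw [ent_f_eq hy]
  apply one_div_le_one_div_of_le hy
  linarith [Real.add_one_le_exp y]

private lemma ent_le_f {y : ℝ} (hy : 0 < y) :
    1 / y - 1 / 2 ≤ Real.exp (-y) / (1 - Real.exp (-y)) := by
  rw [ent_f_eq hy]
  have hE := ent_expm1_pos hy
  have h0 := ent_h_nonneg hy.le
  have key : 1 / (Real.exp y - 1) - (1 / y - 1 / 2) =
      ((y - 2) * Real.exp y + y + 2) / (2 * y * (Real.exp y - 1)) := by
    field_simp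
    ring
  have hpos : 0 ≤ ((y - 2) * Real.exp y + y + 2) / (2 * y * (Real.exp y - 1)) :=
    div_nonneg h0 (by positivity)
  linarith

private lemma ent_f_pos {y : ℝ} (hy : 0 < y) :
    0 < Real.exp (-y) / (1 - Real.exp (-y)) := by
  have := ent_exp_neg_lt_one hy
  apply div_pos (Real.exp_pos _) (by linarith)

private lemma ent_exp_neg_lt_one' {y : ℝ} (hy : 0 < y) : Real.exp (-y) < 1 := by
  calc Real.exp (-y) < Real.exp 0 := Real.exp_lt_exp.2 (by linarith)
    _ = 1 := Real.exp_zero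

private lemma ent_hasDeriv_term {c x : ℝ} (hc : 0 < c) (hx : 0 < x) :
    HasDerivAt (fun t : ℝ => c * Real.log (1 - Real.exp (-t / c)))
      (Real.exp (-x / c) / (1 - Real.exp (-x / c))) x := by
  have hxc : 0 < x / c := div_pos hx hc
  have hlt : Real.exp (-x / c) < 1 := by
    rw [neg_div]; exact ent_exp_neg_lt_one' hxc
  have hne : 1 - Real.exp (-x / c) ≠ 0 := by linarith
  have h1 : HasDerivAt (fun t : ℝ => -t / c) (-1 / c) x := ((hasDerivAt_id x).neg).div_const c
  have h2 := h1.exp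
  have h3 := h2.const_sub 1
  have h4 := h3.log hne
  have h5 := h4.const_mul c
  refine h5.congr_deriv ?_
  field_simp

private lemma ent_tendsto_term_atTop {c : ℝ} (hc : 0 < c) :
    Tendsto (fun t : ℝ => Real.log (1 - Real.exp (-t / c))) atTop (𝓝 0) := by
  have h1 : Tendsto (fun t : ℝ => -t / c) atTop atBot := by
    have ha : Tendsto (fun t : ℝ => t / c) atTop atTop := tendsto_id.atTop_div_const hc
    have := tendsto_neg_atTop_atBot.comp ha
    refine this.congr fun t => ?_
    simp [neg_div]
  have h2 : Tendsto (fun t : ℝ => Real.exp (-t / c)) atTop (𝓝 0) :=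
    Real.tendsto_exp_atBot.comp h1
  have h3 : Tendsto (fun t : ℝ => 1 - Real.exp (-t / c)) atTop (𝓝 1) := by
    have := h2.const_sub 1
    simpa using this
  have := (Real.continuousAt_log (by norm_num : (1:ℝ) ≠ 0)).tendsto.comp h3
  simpa [Function.comp_def] using this

private lemma ent_tendsto_phi :
    Tendsto (fun y : ℝ => Real.log ((1 - Real.exp (-y)) / y)) (𝓝[>] (0:ℝ)) (𝓝 0) := by
  have hd : HasDerivAt (fun y : ℝ => 1 - Real.exp (-y)) 1 0 := by
    have h1 : HasDerivAt (fun y : ℝ => -y) (-1) (0:ℝ) := (hasDerivAt_id (0:ℝ)).neg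
    have h3 := h1.exp.const_sub 1
    refine h3.congr_deriv ?_
    simp
  have hs := hasDerivAt_iff_tendsto_slope.1 hd
  have hmono : (𝓝[>] (0:ℝ)) ≤ 𝓝[≠] (0:ℝ) :=
    nhdsWithin_mono _ (fun y hy => ne_of_gt hy)
  have key : Tendsto (fun y : ℝ => (1 - Real.exp (-y)) / y) (𝓝[>] (0:ℝ)) (𝓝 1) := by
    refine Filter.Tendsto.congr (fun y => ?_) (hs.mono_left hmono)
    simp [slope_def_field]
  have := (Real.continuousAt_log (by norm_num : (1:ℝ) ≠ 0)).tendsto.comp key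
  simpa [Function.comp_def] using this

private lemma ent_map_div {c : ℝ} (hc : 0 < c) :
    Tendsto (fun x : ℝ => x / c) (𝓝[>] (0:ℝ)) (𝓝[>] (0:ℝ)) := by
  apply tendsto_nhdsWithin_of_tendsto_nhds_of_eventually_within
  · have : Tendsto (fun x : ℝ => x / c) (𝓝 0) (𝓝 (0 / c)) :=
      (continuous_id.div_const c).tendsto 0
    rw [zero_div] at this
    exact this.mono_left nhdsWithin_le_nhds
  · filter_upwards [self_mem_nhdsWithin] with x hx
    exact div_pos hx hc

private lemma ent_contAt {c x : ℝ} (hc : 0 < c) (hx : 0 < x) :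
    ContinuousAt (fun t : ℝ => Real.exp (-t / c) / (1 - Real.exp (-t / c))) x := by
  have hlt : Real.exp (-x / c) < 1 := by
    rw [neg_div]; exact ent_exp_neg_lt_one' (div_pos hx hc)
  apply ContinuousAt.div
  · fun_prop
  · fun_prop
  · exact ne_of_gt (by linarith)

theorem entropy_integral (α : ℝ) (hα : α ∈ Set.Ioo (0:ℝ) 1) :
    ∫ x in Set.Ioi (0:ℝ),
        (Real.exp (-x) / (1 - Real.exp (-x)) -
         Real.exp (-x / α) / (1 - Real.exp (-x / α)) -
         Real.exp (-x / (1 - α)) / (1 - Real.exp (-x / (1 - α)))) =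
      -(α * Real.log α + (1 - α) * Real.log (1 - α)) := by
  obtain ⟨hα0, hα1⟩ := hα
  have hβ0 : (0:ℝ) < 1 - α := by linarith
  set c₀ : ℝ := α * Real.log α + (1 - α) * Real.log (1 - α) with hc₀
  set g : ℝ → ℝ := fun x => Real.exp (-x) / (1 - Real.exp (-x)) -
         Real.exp (-x / α) / (1 - Real.exp (-x / α)) -
         Real.exp (-x / (1 - α)) / (1 - Real.exp (-x / (1 - α))) with hg
  set G : ℝ → ℝ := fun x => Real.log (1 - Real.exp (-x))
      - α * Real.log (1 - Real.exp (-x / α))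
      - (1 - α) * Real.log (1 - Real.exp (-x / (1 - α))) with hG
  set H : ℝ → ℝ := fun x => if x ≤ 0 then 0 else G x - c₀ with hH
  -- derivative
  have hderiv : ∀ x ∈ Ioi (0:ℝ), HasDerivAt H (g x) x := by
    intro x hx
    have hx' : (0:ℝ) < x := hx
    have h1 : HasDerivAt (fun t : ℝ => Real.log (1 - Real.exp (-t)))
        (Real.exp (-x) / (1 - Real.exp (-x))) x := by
      simpa using ent_hasDeriv_term one_pos hx'
    have h2 := ent_hasDeriv_term hα0 hx'
    have h3 := ent_hasDeriv_term hβ0 hx'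
    have hGd : HasDerivAt (fun t => G t - c₀) (g x) x := ((h1.sub h2).sub h3).sub_const c₀
    apply hGd.congr_of_eventuallyEq
    filter_upwards [lt_mem_nhds hx'] with t ht
    simp [hH, not_le.2 ht]
  -- pointwise bounds: |g x| ≤ 1 on Ioi 0
  have habs : ∀ x : ℝ, 0 < x → |g x| ≤ 1 := by
    intro x hx
    have hxα : 0 < x / α := div_pos hx hα0
    have hxβ : 0 < x / (1 - α) := div_pos hx hβ0
    have e2 : Real.exp (-x / α) / (1 - Real.exp (-x / α)) =
        Real.exp (-(x / α)) / (1 - Real.exp (-(x / α))) := by rw [neg_div]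
    have e3 : Real.exp (-x / (1 - α)) / (1 - Real.exp (-x / (1 - α))) =
        Real.exp (-(x / (1 - α))) / (1 - Real.exp (-(x / (1 - α)))) := by rw [neg_div]
    have u1 := ent_f_le hx
    have l1 := ent_le_f hx
    have u2 := ent_f_le hxα
    have l2 := ent_le_f hxα
    have u3 := ent_f_le hxβ
    have l3 := ent_le_f hxβ
    rw [one_div_div] at u2 l2 u3 l3
    have id1 : 1 / x - (α / x - 1 / 2) - ((1 - α) / x - 1 / 2) = 1 := by
      field_simp
      ring
    have id2 : (1 / x - 1 / 2) - α / x - (1 - α) / x = -(1/2) := by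
      field_simp
      ring
    rw [abs_le]
    constructor
    · rw [hg]; dsimp only; rw [e2, e3]; nlinarith [l1, u2, u3]
    · rw [hg]; dsimp only; rw [e2, e3]; nlinarith [u1, l2, l3]
  -- continuity of g on Ioi 0
  have hgcont : ContinuousOn g (Ioi 0) := by
    intro x hx
    have hx' : (0:ℝ) < x := hx
    have t1 : ContinuousAt (fun t : ℝ => Real.exp (-t) / (1 - Real.exp (-t))) x := by
      simpa using ent_contAt one_pos hx'
    have t2 := ent_contAt hα0 hx'
    have t3 := ent_contAt hβ0 hx'
    exact ContinuousAt.continuousWithinAt ((t1.sub t2).sub t3)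
  -- integrability
  have hint : IntegrableOn g (Ioi (0:ℝ)) := by
    rw [← Ioc_union_Ioi_eq_Ioi (zero_le_one : (0:ℝ) ≤ 1)]
    apply IntegrableOn.union
    · apply Integrable.mono' (integrable_const (1:ℝ))
      · exact (hgcont.mono Ioc_subset_Ioi_self).aestronglyMeasurable measurableSet_Ioc
      · rw [ae_restrict_iff' measurableSet_Ioc]
        filter_upwards with x hx
        rw [Real.norm_eq_abs]
        exact habs x hx.1
    · have hden : (0:ℝ) < 1 - Real.exp (-1) := by
        have := ent_exp_neg_lt_one' (one_pos (α := ℝ)); linarith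
      have base : IntegrableOn (fun x : ℝ => Real.exp (-x)) (Ioi 1) := by
        simpa using exp_neg_integrableOn_Ioi 1 one_pos
      apply Integrable.mono' ((base.const_mul (3 / (1 - Real.exp (-1)))))
      · exact (hgcont.mono (Ioi_subset_Ioi zero_le_one)).aestronglyMeasurable measurableSet_Ioi
      · rw [ae_restrict_iff' measurableSet_Ioi]
        filter_upwards with x hx
        have hx1 : (1:ℝ) < x := hx
        have hx' : (0:ℝ) < x := by linarith
        have hxα : x ≤ x / α := by
          rw [le_div_iff₀ hα0]; nlinarith
        have hxβ : x ≤ x / (1 - α) := by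
          rw [le_div_iff₀ hβ0]; nlinarith
        have bdd : ∀ y : ℝ, x ≤ y →
            Real.exp (-y) / (1 - Real.exp (-y)) ≤ Real.exp (-x) / (1 - Real.exp (-1)) := by
          intro y hy
          have hy1 : (1:ℝ) ≤ y := le_trans hx1.le hy
          have hnum : Real.exp (-y) ≤ Real.exp (-x) := Real.exp_le_exp.2 (by linarith)
          have hden2 : Real.exp (-y) ≤ Real.exp (-1) := Real.exp_le_exp.2 (by linarith)
          exact div_le_div₀ (Real.exp_pos _).le hnum hden (by linarith)
        have b1 := bdd x le_rfl
        have b2 := bdd (x / α) hxα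
        have b3 := bdd (x / (1 - α)) hxβ
        have p1 := ent_f_pos hx'
        have p2 := ent_f_pos (div_pos hx' hα0)
        have p3 := ent_f_pos (div_pos hx' hβ0)
        have e2 : Real.exp (-x / α) / (1 - Real.exp (-x / α)) =
            Real.exp (-(x / α)) / (1 - Real.exp (-(x / α))) := by rw [neg_div]
        have e3 : Real.exp (-x / (1 - α)) / (1 - Real.exp (-x / (1 - α))) =
            Real.exp (-(x / (1 - α))) / (1 - Real.exp (-(x / (1 - α)))) := by rw [neg_div]
        have hq : 3 / (1 - Real.exp (-1)) * Real.exp (-x)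
            = 3 * (Real.exp (-x) / (1 - Real.exp (-1))) := by ring
        rw [Real.norm_eq_abs, abs_le]
        constructor
        · rw [hg]; dsimp only; rw [e2, e3]; nlinarith [hq]
        · rw [hg]; dsimp only; rw [e2, e3]; nlinarith [hq]
  -- continuity of H at 0 from the right
  have hcont : ContinuousWithinAt H (Ici (0:ℝ)) 0 := by
    rw [← continuousWithinAt_Ioi_iff_Ici]
    have hH0 : H 0 = 0 := by simp [hH]
    rw [ContinuousWithinAt, hH0]
    have l1 := ent_tendsto_phi
    have l2 := ent_tendsto_phi.comp (ent_map_div hα0)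
    have l3 := ent_tendsto_phi.comp (ent_map_div hβ0)
    have lim0 : Tendsto (fun x : ℝ =>
        Real.log ((1 - Real.exp (-x)) / x)
        - α * Real.log ((1 - Real.exp (-(x / α))) / (x / α))
        - (1 - α) * Real.log ((1 - Real.exp (-(x / (1 - α)))) / (x / (1 - α))))
        (𝓝[>] (0:ℝ)) (𝓝 0) := by
      have := (l1.sub (l2.const_mul α)).sub (l3.const_mul (1 - α))
      simpa [Function.comp] using this
    apply Tendsto.congr' _ lim0
    filter_upwards [self_mem_nhdsWithin] with x hx
    have hx' : (0:ℝ) < x := hx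
    have hxα : 0 < x / α := div_pos hx' hα0
    have hxβ : 0 < x / (1 - α) := div_pos hx' hβ0
    have n1 : 1 - Real.exp (-x) ≠ 0 := by
      have := ent_exp_neg_lt_one' hx'; linarith
    have n2 : 1 - Real.exp (-(x / α)) ≠ 0 := by
      have := ent_exp_neg_lt_one' hxα; linarith
    have n3 : 1 - Real.exp (-(x / (1 - α))) ≠ 0 := by
      have := ent_exp_neg_lt_one' hxβ; linarith
    have e1 : Real.log ((1 - Real.exp (-x)) / x)
        = Real.log (1 - Real.exp (-x)) - Real.log x := Real.log_div n1 hx'.ne'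
    have e2 : Real.log ((1 - Real.exp (-(x / α))) / (x / α))
        = Real.log (1 - Real.exp (-x / α)) - (Real.log x - Real.log α) := by
      rw [Real.log_div n2 hxα.ne', Real.log_div hx'.ne' hα0.ne', neg_div]
    have e3 : Real.log ((1 - Real.exp (-(x / (1 - α)))) / (x / (1 - α)))
        = Real.log (1 - Real.exp (-x / (1 - α))) - (Real.log x - Real.log (1 - α)) := by
      rw [Real.log_div n3 hxβ.ne', Real.log_div hx'.ne' hβ0.ne', neg_div]
    rw [e1, e2, e3]
    simp only [hH, hG, hc₀, if_neg (not_le.2 hx')]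
    ring
  -- limit at infinity
  have tG : Tendsto G atTop (𝓝 0) := by
    have t1 : Tendsto (fun x : ℝ => Real.log (1 - Real.exp (-x))) atTop (𝓝 0) := by
      simpa using ent_tendsto_term_atTop one_pos
    have := (t1.sub ((ent_tendsto_term_atTop hα0).const_mul α)).sub
      ((ent_tendsto_term_atTop hβ0).const_mul (1 - α))
    simpa [hG] using this
  have tH : Tendsto H atTop (𝓝 (0 - c₀)) := by
    apply Tendsto.congr' _ (tG.sub_const c₀)
    filter_upwards [Ioi_mem_atTop (0:ℝ)] with x hx
    simp [hH, not_le.2 (mem_Ioi.1 hx)]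
  have key := integral_Ioi_of_hasDerivAt_of_tendsto hcont hderiv hint tH
  rw [key]
  simp [hH]
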